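/- Suppose f is locally univalent meromorphic on 𝔻 with Sf(z) = (1−z²)^{−2}. Then Vf(z) = 8i·Im(z) / [(1−|z|²)(1−z²)³] and ‖Vf‖₃ = sup_{z∈𝔻}(1−|z|²)³|Vf(z)| = 8√3/9. -/

import Mathlib

open Complex Metric Set

/-- The Schwarzian derivative `Sf = f'''/f' - (3/2)(f''/f')²`. -/
noncomputable def schwarzian (f : ℂ → ℂ) (z : ℂ) : ℂ :=
  deriv (deriv (deriv f)) z / deriv f z - (3 / 2) * (deriv (deriv f) z / deriv f z) ^ 2

/-- `Vf(z) = (Sf)'(z) - 4 z̄ (1 - |z|²)⁻¹ Sf(z)`. -/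
noncomputable def projSchwarzian (f : ℂ → ℂ) (z : ℂ) : ℂ :=
  deriv (schwarzian f) z
    - 4 * (starRingEnd ℂ) z / (1 - ((‖z‖ : ℝ) : ℂ) ^ 2) * schwarzian f z

/-- Key modulus identity: `|1-z²|² = (1-|z|²)² + 4 (Im z)²`. -/
lemma aux_abs_sq (z : ℂ) :
    ‖1 - z^2‖ ^ 2 = (1 - ‖z‖ ^ 2)^2 + 4 * z.im^2 := by
  rw [← Complex.normSq_eq_norm_sq, ← Complex.normSq_eq_norm_sq]
  simp [Complex.normSq_apply, pow_two, Complex.mul_re, Complex.mul_im]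
  ring

/-- Real upper bound: if `w² = u² + 4m²` then `8mu²/w³ ≤ 8√3/9`. -/
lemma aux_upper (u w m : ℝ) (hu : 0 < u) (hw : 0 < w) (hm : 0 ≤ m)
    (hw2 : w^2 = u^2 + 4*m^2) :
    8*m*u^2/w^3 ≤ 8 * Real.sqrt 3 / 9 := by
  have hs3 : Real.sqrt 3 ^ 2 = 3 := Real.sq_sqrt (by norm_num)
  have expand : (Real.sqrt 3*w^3 - 9*m*u^2) * (Real.sqrt 3*w^3 + 9*m*u^2)
      = 3*(8*m^2-u^2)^2*(m^2+u^2) := by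
    linear_combination (3*(w^4 + w^2*(u^2+4*m^2) + (u^2+4*m^2)^2)) * hw2 + (w^6) * hs3
  have h1 : 0 ≤ (Real.sqrt 3*w^3 - 9*m*u^2) * (Real.sqrt 3*w^3 + 9*m*u^2) := by
    rw [expand]; positivity
  have hs3p : 0 < Real.sqrt 3 := Real.sqrt_pos.mpr (by norm_num)
  have hsum : 0 < Real.sqrt 3*w^3 + 9*m*u^2 := by positivity
  have key : 9*m*u^2 ≤ Real.sqrt 3 * w^3 := by nlinarith [h1, hsum]
  rw [div_le_div_iff₀ (by positivity) (by norm_num)]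
  nlinarith [key]

/-- Computation of the weighted modulus of the explicit `Vf`. -/
lemma aux_absval (z : ℂ) (hu : (0:ℝ) < 1 - ‖z‖ ^ 2) (hz2 : (1:ℂ) - z^2 ≠ 0) :
    (1 - ‖z‖ ^ 2)^3 *
      ‖8 * Complex.I * (z.im : ℂ) / ((1 - ((‖z‖ : ℝ) : ℂ) ^ 2) * (1 - z ^ 2) ^ 3)‖
    = 8 * |z.im| * (1 - ‖z‖ ^ 2)^2 / (‖1 - z^2‖)^3 := by
  have hcast : (1:ℂ) - ((‖z‖ : ℝ) : ℂ)^2 = ((1 - ‖z‖ ^2 : ℝ) : ℂ) := by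
    push_cast; ring
  have hw : (0:ℝ) < ‖1 - z^2‖ := by
    simpa using hz2
  rw [hcast, norm_div, norm_mul, norm_mul, norm_mul, norm_pow, Complex.norm_I,
    Complex.norm_real, Real.norm_eq_abs, Complex.norm_real, Real.norm_eq_abs, abs_of_pos hu]
  have h8 : ‖(8:ℂ)‖ = 8 := by norm_num
  rw [h8]
  field_simp

/-- If `Sf(z) = (1-z²)⁻²` on `𝔻`, then `Vf(z) = 8 i Im z / [(1-|z|²)(1-z²)³]`
and `‖Vf‖₃ = 8√3/9`. -/
theorem projSchwarzian_of_special_schwarzian (f : ℂ → ℂ)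
    (hf : MeromorphicOn f (ball (0 : ℂ) 1))
    (hloc : ∀ z ∈ ball (0 : ℂ) 1, ∃ U ∈ nhds z, Set.InjOn f U)
    (hS : ∀ z ∈ ball (0 : ℂ) 1, schwarzian f z = ((1 - z ^ 2) ^ 2)⁻¹) :
    (∀ z ∈ ball (0 : ℂ) 1,
      projSchwarzian f z =
        8 * Complex.I * (z.im : ℂ) /
          ((1 - ((‖z‖ : ℝ) : ℂ) ^ 2) * (1 - z ^ 2) ^ 3)) ∧
    (⨆ z : ball (0 : ℂ) 1,
        (1 - ‖(z : ℂ)‖ ^ 2) ^ 3 * ‖projSchwarzian f z‖)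
      = 8 * Real.sqrt 3 / 9 := by
  -- basic facts valid for any `z ∈ 𝔻`
  have hball : ∀ z ∈ ball (0:ℂ) 1, (0:ℝ) < 1 - ‖z‖ ^ 2 := by
    intro z hz
    have hz1 : ‖z‖ < 1 := by
      simpa using mem_ball_zero_iff.mp hz
    nlinarith [norm_nonneg z]
  have hone : ∀ z ∈ ball (0:ℂ) 1, (1:ℂ) - z^2 ≠ 0 := by
    intro z hz h
    have hu := hball z hz
    have hz2' : z^2 = 1 := by linear_combination -h
    have h2 : ‖z‖ ^ 2 = 1 := by
      calc ‖z‖ ^ 2 = ‖z^2‖ := (norm_pow _ _).symm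
        _ = 1 := by rw [hz2']; simp
    nlinarith
  -- Part 1 : the formula
  have hformula : ∀ z ∈ ball (0:ℂ) 1,
      projSchwarzian f z =
        8 * Complex.I * (z.im : ℂ) /
          ((1 - ((‖z‖ : ℝ) : ℂ) ^ 2) * (1 - z ^ 2) ^ 3) := by
    intro z hz
    have hu := hball z hz
    have hz2 := hone z hz
    have hzc : (1:ℂ) - ((‖z‖ : ℝ) : ℂ)^2 ≠ 0 := by
      rw [show (1:ℂ) - ((‖z‖ : ℝ) : ℂ)^2 = ((1 - ‖z‖ ^2 : ℝ) : ℂ) by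
        push_cast; ring]
      exact_mod_cast hu.ne'
    -- the derivative of the Schwarzian
    have h2 : HasDerivAt (fun w : ℂ => (1 - w^2)^2) (2*(1-z^2)^1*(-(2*z^1))) z :=
      ((hasDerivAt_pow 2 z).const_sub 1).pow 2
    have h3 := h2.inv (pow_ne_zero 2 hz2)
    have h1 : HasDerivAt (fun w : ℂ => ((1 - w^2)^2)⁻¹) (4*z/(1-z^2)^3) z := by
      refine h3.congr_deriv ?_
      rw [div_eq_div_iff (pow_ne_zero 2 (pow_ne_zero 2 hz2)) (pow_ne_zero 3 hz2)]
      ring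
    have hev : schwarzian f =ᶠ[nhds z] fun w => ((1 - w^2)^2)⁻¹ :=
      Filter.eventuallyEq_of_mem (isOpen_ball.mem_nhds hz) hS
    have hd : deriv (schwarzian f) z = 4*z/(1-z^2)^3 := by
      rw [hev.deriv_eq, h1.deriv]
    unfold projSchwarzian
    rw [hd, hS z hz]
    have hcc : (((‖z‖ : ℝ) : ℂ))^2 = z * (starRingEnd ℂ) z := by
      rw [Complex.mul_conj]
      norm_cast
      exact (Complex.sq_norm z)
    have him : (z.im : ℂ) = (z - (starRingEnd ℂ) z) / (2 * Complex.I) := by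
      rw [Complex.sub_conj]
      push_cast
      field_simp
    rw [hcc] at hzc ⊢
    rw [him]
    field_simp
    ring
  refine ⟨hformula, ?_⟩
  -- Part 2 : the supremum
  haveI : Nonempty (ball (0:ℂ) 1) := ⟨⟨0, by simp⟩⟩
  -- the weighted modulus at any point of the ball
  have hgval : ∀ z ∈ ball (0:ℂ) 1,
      (1 - ‖z‖ ^ 2) ^ 3 * ‖projSchwarzian f z‖
      = 8 * |z.im| * (1 - ‖z‖ ^ 2)^2 / (‖1 - z^2‖)^3 := by
    intro z hz
    rw [hformula z hz]
    exact aux_absval z (hball z hz) (hone z hz)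
  have hub : ∀ z : ball (0:ℂ) 1,
      (1 - ‖(z:ℂ)‖ ^ 2) ^ 3 * ‖projSchwarzian f (z:ℂ)‖
        ≤ 8 * Real.sqrt 3 / 9 := by
    rintro ⟨z, hz⟩
    simp only
    rw [hgval z hz]
    have hu := hball z hz
    have hw : (0:ℝ) < ‖1 - z^2‖ := by
      simpa using hone z hz
    have hw2 : (‖1 - z^2‖)^2 = (1 - ‖z‖ ^2)^2 + 4*|z.im|^2 := by
      rw [aux_abs_sq z, _root_.sq_abs]
    have := aux_upper (1 - ‖z‖ ^2) (‖1 - z^2‖) |z.im|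
      hu hw (abs_nonneg _) hw2
    calc 8 * |z.im| * (1 - ‖z‖ ^ 2)^2 / (‖1 - z^2‖)^3
        = 8 * |z.im| * (1 - ‖z‖ ^2)^2 / (‖1 - z^2‖)^3 := by ring_nf
      _ ≤ 8 * Real.sqrt 3 / 9 := by
          have h' : 8 * |z.im| * (1 - ‖z‖ ^ 2) ^ 2
              = 8 * |z.im| * (1 - ‖z‖ ^2) ^2 := by ring
          linarith [this]
  have hbdd : BddAbove (Set.range fun z : ball (0:ℂ) 1 =>
      (1 - ‖(z:ℂ)‖ ^ 2) ^ 3 * ‖projSchwarzian f (z:ℂ)‖) := by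
    refine ⟨8 * Real.sqrt 3 / 9, ?_⟩
    rintro x ⟨z, rfl⟩
    exact hub z
  -- the explicit maximizing point
  set t := Real.sqrt 3 with ht_def
  set s := Real.sqrt 2 with hs_def
  have hs : s^2 = 2 := Real.sq_sqrt (by norm_num)
  have ht : t^2 = 3 := Real.sq_sqrt (by norm_num)
  have hsp : 0 < s := Real.sqrt_pos.mpr (by norm_num)
  have htp : 0 < t := Real.sqrt_pos.mpr (by norm_num)
  set a := t - s with ha_def
  have ha : 0 < a := by
    have : s < t := Real.sqrt_lt_sqrt (by norm_num) (by norm_num)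
    simpa [ha_def] using sub_pos.mpr this
  have ha1 : a < 1 := by nlinarith
  have hst2 : 2 < s * t := by nlinarith [mul_pos hsp htp]
  have h1a : 1 - a^2 = 2*(s*t) - 4 := by linear_combination -hs - ht
  have h2a : 1 + a^2 = 6 - 2*(s*t) := by linear_combination hs + ht
  have hval : 8*a*(1-a^2)^2/(1+a^2)^3 = 8 * t / 9 := by
    rw [h1a, h2a, div_eq_div_iff (pow_pos (by nlinarith) 3).ne' (by norm_num : (9:ℝ) ≠ 0)]
    linear_combination (-288*t^3 - 288*s*t^2 + 1152*t + 64*s*t^4) * hs +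
      (384*s - 576*t + 128*s*t^2) * ht
  set z₀ : ℂ := (a : ℂ) * Complex.I with hz₀def
  have habs0 : ‖z₀‖ = a := by
    rw [hz₀def, norm_mul, Complex.norm_I, Complex.norm_real, Real.norm_eq_abs, abs_of_pos ha, mul_one]
  have hmem : z₀ ∈ ball (0:ℂ) 1 := by
    simp only [mem_ball, dist_zero_right, habs0]
    exact ha1
  have him0 : z₀.im = a := by simp [hz₀def]
  have hsq0 : (1:ℂ) - z₀^2 = ((1 + a^2 : ℝ) : ℂ) := by
    rw [hz₀def]; push_cast
    rw [mul_pow, Complex.I_sq]; ring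
  have hg0 : (1 - ‖z₀‖ ^ 2) ^ 3 * ‖projSchwarzian f z₀‖
      = 8 * Real.sqrt 3 / 9 := by
    rw [hgval z₀ hmem, him0, habs0, hsq0, Complex.norm_real, Real.norm_eq_abs,
      abs_of_pos (by positivity : (0:ℝ) < 1 + a^2), abs_of_pos ha]
    linear_combination hval
  apply le_antisymm
  · exact ciSup_le hub
  · calc (8 : ℝ) * Real.sqrt 3 / 9
        = (1 - ‖((⟨z₀, hmem⟩ : ball (0:ℂ) 1) : ℂ)‖ ^ 2) ^ 3 *
            ‖projSchwarzian f ((⟨z₀, hmem⟩ : ball (0:ℂ) 1) : ℂ)‖ := hg0.symm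
      _ ≤ _ := le_ciSup hbdd ⟨z₀, hmem⟩
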